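/- Let n ≥ 1 and k ≥ 1 be integers, and let μ be the greedy partition of n defined by μ_1 = ⌈n/k⌉ and μ_i = ⌈(n − Σ_{j<i} μ_j)/k⌉ for i > 1 (stopping when the remainder reaches 0). Then every partition λ of n that generates all k-partitions of n satisfies |λ| ≥ |μ|; that is, μ has minimum size among all partitions of n that generate all k-partitions of n. -/

import Mathlib

/-- A partition of `n`: a multiset of positive integers summing to `n`. -/
def IsPartition (n : ℕ) (lam : Multiset ℕ) : Prop :=
  (∀ x ∈ lam, 0 < x) ∧ lam.sum = n

/-- `μ` generates `lam`: `μ` decomposes into disjoint sub-multisets, one summing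
to each part of `lam`. -/
def Generates (μ lam : Multiset ℕ) : Prop :=
  ∃ P : Multiset (Multiset ℕ), P.sum = μ ∧ P.map Multiset.sum = lam

/-- `μ` generates all partitions of `n` with at most `k` parts. -/
def GeneratesAll (n k : ℕ) (μ : Multiset ℕ) : Prop :=
  ∀ lam : Multiset ℕ, IsPartition n lam → Multiset.card lam ≤ k → Generates μ lam

/-- The greedy partition: repeatedly take `⌈remainder / k⌉`. -/
def greedyList (k : ℕ) : ℕ → List ℕ
  | 0 => []
  | (n + 1) =>
    if hk : k = 0 then []
    else (n + k) / k :: greedyList k (n + 1 - (n + k) / k)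
  termination_by n => n
  decreasing_by
    have h1 : 1 ≤ (n + k) / k :=
      (Nat.one_le_div_iff (Nat.pos_of_ne_zero hk)).mpr (Nat.le_add_left k n)
    omega

/-- split `w` into at most `m` positive parts each at most `b` -/
lemma aux_split_list (b : ℕ) : ∀ m w : ℕ, 1 ≤ w → w ≤ m * b →
    ∃ s : List ℕ, s.sum = w ∧ s.length ≤ m ∧ ∀ x ∈ s, 0 < x ∧ x ≤ b := by
  intro m
  induction m with
  | zero => intro w h1 h2; simp at h2; omega
  | succ m ih =>
    intro w h1 h2
    by_cases hb : w ≤ b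
    · refine ⟨[w], by simp, by simp, ?_⟩
      intro x hx; simp at hx; omega
    · push_neg at hb
      have hb1 : 0 < b := by
        rcases Nat.eq_zero_or_pos b with h0 | h0
        · subst h0; simp at h2; omega
        · exact h0
      have hmul : (m + 1) * b = m * b + b := by ring
      obtain ⟨s, hs1, hs2, hs3⟩ := ih (w - b) (by omega) (by omega)
      refine ⟨b :: s, ?_, ?_, ?_⟩
      · simp only [List.sum_cons, hs1]; omega
      · simp only [List.length_cons]; omega
      intro x hx
      rcases List.mem_cons.mp hx with h | h
      · subst h; constructor <;> omega
      · exact hs3 x h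

lemma aux_mem_msum {Q : Multiset (Multiset ℕ)} {x : ℕ} (h : x ∈ Q.sum) :
    ∃ C ∈ Q, x ∈ C := by
  induction Q using Multiset.induction with
  | empty => simp at h
  | cons a s ih =>
    rw [Multiset.sum_cons] at h
    rcases Multiset.mem_add.mp h with h | h
    · exact ⟨a, Multiset.mem_cons_self .., h⟩
    · obtain ⟨C, hC, hx⟩ := ih h
      exact ⟨C, Multiset.mem_cons_of_mem hC, hx⟩

lemma aux_msum_le_sum {s t : Multiset ℕ} (h : s ≤ t) : s.sum ≤ t.sum := by
  obtain ⟨u, rfl⟩ := Multiset.le_iff_exists_add.mp h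
  rw [Multiset.sum_add]; omega

/-- The key combinatorial lemma: in any partition generating all k-partitions,
sorted descending, each part is at most the ceiling of (remaining sum)/k. -/
lemma aux_key (n k : ℕ) (hk : 1 ≤ k)
    (lam : Multiset ℕ) (hpart : IsPartition n lam) (hgen : GeneratesAll n k lam)
    (l : List ℕ) (hcoe : (l : Multiset ℕ) = lam) (hsort : l.Pairwise (· ≥ ·)) :
    ∀ i (h : i < l.length), k * l.get ⟨i, h⟩ ≤ (l.drop i).sum + (k - 1) := by
  intro i h
  by_contra hcon
  push_neg at hcon
  set a := l.get ⟨i, h⟩ with ha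
  have hdropeq : l.drop i = a :: l.drop (i + 1) := List.drop_eq_getElem_cons h
  set suf := (l.drop (i + 1)).sum with hsuf
  have hr : (l.drop i).sum = a + suf := by rw [hdropeq]; simp [hsuf]
  have hpos : ∀ x ∈ l, 0 < x := fun x hx => hpart.1 x (by rw [← hcoe]; exact Multiset.mem_coe.mpr hx)
  have hapos : 0 < a := hpos a (l.get_mem _)
  have hlsum : l.sum = n := by
    have := hpart.2; rw [← hcoe] at this; simpa using this
  set tk := (l.take i).sum with htk
  have hn : tk + (a + suf) = n := by
    rw [← hr, htk, ← List.sum_append, List.take_append_drop, hlsum]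
  rw [hr] at hcon
  -- from hcon : a + suf + (k-1) < k * a, derive a ≥ 2
  have ha2 : 2 ≤ a := by
    by_contra hc
    have : a = 1 := by omega
    rw [this, Nat.mul_one] at hcon; omega
  obtain ⟨k', rfl⟩ : ∃ k', k = k' + 1 := ⟨k - 1, by omega⟩
  obtain ⟨a', haa⟩ : ∃ a', a = a' + 2 := ⟨a - 2, by omega⟩
  rw [haa] at hcon
  have hprod : (k' + 1) * (a' + 2) = k' * a' + 2 * k' + a' + 2 := by ring
  have hprod2 : k' * (a' + 1) = k' * a' + k' := by ring
  have hw : suf + 1 ≤ k' * (a' + 1) := by omega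
  obtain ⟨s, hs1, hs2, hs3⟩ := aux_split_list (a' + 1) k' (suf + 1) (by omega) hw
  set v := n - (suf + 1) with hv
  have hvval : v = tk + a' + 1 := by omega
  -- the bad partition
  have hbad : IsPartition n (v ::ₘ (↑s : Multiset ℕ)) := by
    constructor
    · intro x hx
      rcases Multiset.mem_cons.mp hx with hx | hx
      · omega
      · exact (hs3 x (Multiset.mem_coe.mp hx)).1
    · rw [Multiset.sum_cons]
      have : (↑s : Multiset ℕ).sum = s.sum := by simp
      rw [this, hs1]; omega
  have hcard : Multiset.card (v ::ₘ (↑s : Multiset ℕ)) ≤ k' + 1 := by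
    rw [Multiset.card_cons, Multiset.coe_card]; omega
  obtain ⟨P, hP1, hP2⟩ := hgen _ hbad hcard
  have hvmem : v ∈ P.map Multiset.sum := by rw [hP2]; exact Multiset.mem_cons_self ..
  obtain ⟨B, hBP, hBv⟩ := Multiset.mem_map.mp hvmem
  set Q := P.erase B with hQdef
  have hPe : B ::ₘ Q = P := Multiset.cons_erase hBP
  have hQmap : Q.map Multiset.sum = (↑s : Multiset ℕ) := by
    have h1 : (B ::ₘ Q).map Multiset.sum = v ::ₘ ↑s := by rw [hPe]; exact hP2
    rw [Multiset.map_cons, hBv] at h1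
    exact (Multiset.cons_inj_right v).mp h1
  have hlamBQ : lam = B + Q.sum := by
    rw [← hP1, ← hPe, Multiset.sum_cons]
  -- elements of Q.sum are at most a' + 1
  have hQsmall : ∀ x ∈ Q.sum, x ≤ a' + 1 := by
    intro x hx
    obtain ⟨C, hC, hxC⟩ := aux_mem_msum hx
    have h1 : x ≤ C.sum := Multiset.single_le_sum (fun y _ => Nat.zero_le y) x hxC
    have h2 : C.sum ∈ (↑s : Multiset ℕ) := by
      rw [← hQmap]; exact Multiset.mem_map_of_mem _ hC
    have h3 := (hs3 _ (Multiset.mem_coe.mp h2)).2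
    omega
  -- elements of take (i+1) are at least a
  have htakebig : ∀ x ∈ l.take (i + 1), a' + 2 ≤ x := by
    intro x hx
    obtain ⟨j, hjx⟩ := List.mem_iff_get.mp hx
    have hjlt : (j : ℕ) < i + 1 := by
      have := j.2; simp [List.length_take] at this; omega
    have hjl : (j : ℕ) < l.length := lt_of_lt_of_le hjlt (by omega)
    have hgt : (l.take (i + 1)).get j = l.get ⟨j, hjl⟩ := by simp
    have hrel : l.get ⟨j, hjl⟩ ≥ l.get ⟨i, h⟩ :=
      hsort.rel_get_of_le (by simp [Fin.le_def]; omega)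
    rw [← hjx, hgt]
    omega
  -- the take (i+1) multiset is contained in B
  have htakeleB : (↑(l.take (i + 1)) : Multiset ℕ) ≤ B := by
    rw [Multiset.le_iff_count]
    intro x
    by_cases hxa : a' + 2 ≤ x
    · have hxQ : x ∉ Q.sum := fun hxq => by have := hQsmall x hxq; omega
      have hcnt : Multiset.count x lam = Multiset.count x B := by
        rw [hlamBQ, Multiset.count_add, Multiset.count_eq_zero.mpr hxQ, add_zero]
      have h1 : Multiset.count x (↑(l.take (i + 1)) : Multiset ℕ) ≤
          Multiset.count x (↑l : Multiset ℕ) := by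
        apply Multiset.count_le_of_le
        exact (List.take_sublist _ _).subperm
      rw [hcoe, hcnt] at h1
      exact h1
    · have : x ∉ l.take (i + 1) := fun hx => hxa (htakebig x hx)
      rw [Multiset.count_eq_zero.mpr (by simpa using this)]
      exact Nat.zero_le _
  have hsumle : (l.take (i + 1)).sum ≤ B.sum := by
    have := aux_msum_le_sum htakeleB
    simpa using this
  have htks : (l.take (i + 1)).sum = tk + a := List.sum_take_succ l i h
  rw [htks, hBv, hvval, haa] at hsumle
  omega

/-- monotonicity of greedy list length -/
lemma aux_greedy_mono (k : ℕ) (hk : 1 ≤ k) :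
    ∀ m' m, m ≤ m' → (greedyList k m).length ≤ (greedyList k m').length := by
  intro m'
  induction m' using Nat.strong_induction_on with
  | _ m' ih =>
    intro m hm
    match m, m' with
    | 0, _ => simp [greedyList]
    | (a + 1), (b + 1) =>
      have hkne : k ≠ 0 := by omega
      rw [greedyList, greedyList]
      simp only [hkne, dite_false]
      simp only [List.length_cons, Nat.add_le_add_iff_right]
      have hb1 : 1 ≤ (b + k) / k := (Nat.one_le_div_iff (by omega)).mpr (Nat.le_add_left k b)
      have ha1 : 1 ≤ (a + k) / k := (Nat.one_le_div_iff (by omega)).mpr (Nat.le_add_left k a)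
      apply ih (b + 1 - (b + k) / k) (by omega)
      -- monotonicity of the remainder map
      have hmono : ∀ c, c + 1 - (c + k) / k ≤ c + 2 - (c + 1 + k) / k := by
        intro c
        have h1 : (c + 1 + k) / k ≤ (c + k) / k + 1 := by
          have : c + 1 + k ≤ (c + k) + k := by omega
          calc (c + 1 + k) / k ≤ ((c + k) + k) / k := Nat.div_le_div_right this
            _ = (c + k) / k + 1 := Nat.add_div_right _ (by omega)
        have h2 : 1 ≤ (c + k) / k := (Nat.one_le_div_iff (by omega)).mpr (Nat.le_add_left k c)
        omega
      have : ∀ d c, c ≤ d → c + 1 - (c + k) / k ≤ d + 1 - (d + k) / k := by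
        intro d
        induction d with
        | zero =>
          intro c hc
          have hc0 : c = 0 := by omega
          subst hc0; exact le_rfl
        | succ d ihd =>
          intro c hc
          rcases Nat.lt_or_ge c (d + 1) with hlt | hge
          · exact le_trans (ihd c (by omega)) (by simpa using hmono d)
          · have : c = d + 1 := by omega
            subst this; exact le_rfl
      exact this b a (by omega)

/-- main length lemma -/
lemma aux_len_le (k : ℕ) (hk : 1 ≤ k) :
    ∀ m (l : List ℕ), (∀ x ∈ l, 0 < x) → l.sum = m →
    (∀ i (h : i < l.length), k * l.get ⟨i, h⟩ ≤ (l.drop i).sum + (k - 1)) →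
    (greedyList k m).length ≤ l.length := by
  intro m
  induction m using Nat.strong_induction_on with
  | _ m ih =>
    intro l hpos hsum hcond
    match m, hsum with
    | 0, hsum => simp [greedyList]
    | (n + 1), hsum =>
      match l, hsum with
      | [], hsum => simp at hsum
      | (a :: t), hsum =>
        have hane : 0 < a := hpos a (List.mem_cons_self ..)
        have h0 : k * a ≤ (a + t.sum) + (k - 1) := by
          have := hcond 0 (by simp)
          simpa using this
        have hkne : k ≠ 0 := by omega
        rw [greedyList]
        simp only [hkne, dite_false, List.length_cons]
        simp only [Nat.add_le_add_iff_right]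
        -- a ≤ (n + k) / k
        have hale : a ≤ (n + k) / k := by
          rw [Nat.le_div_iff_mul_le (by omega)]
          have : a * k = k * a := Nat.mul_comm a k
          rw [List.sum_cons] at hsum
          omega
        have htsum : t.sum = n + 1 - a := by
          rw [List.sum_cons] at hsum; omega
        have h1 : 1 ≤ (n + k) / k := (Nat.one_le_div_iff (by omega)).mpr (Nat.le_add_left k n)
        have hle2 : (n + k) / k ≤ n + 1 := by
          have : n + k ≤ (n + 1) * k := by nlinarith
          calc (n + k) / k ≤ ((n + 1) * k) / k := Nat.div_le_div_right this
            _ = n + 1 := Nat.mul_div_cancel _ (by omega)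
        calc (greedyList k (n + 1 - (n + k) / k)).length
            ≤ (greedyList k t.sum).length := by
              apply aux_greedy_mono k hk
              omega
          _ ≤ t.length := by
              apply ih t.sum (by omega) t (fun x hx => hpos x (List.mem_cons_of_mem _ hx)) rfl
              intro i hi
              have := hcond (i + 1) (by simpa using Nat.add_lt_add_right hi 1)
              simpa using this

/-- the greedy partition has minimum size among all partitions of
`n` that generate all `k`-partitions of `n`. -/
theorem greedy_minimal_size (n k : ℕ) (hn : 1 ≤ n) (hk : 1 ≤ k)
    (lam : Multiset ℕ) (hpart : IsPartition n lam)
    (hgen : GeneratesAll n k lam) :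
    (greedyList k n).length ≤ Multiset.card lam := by
  classical
  set l := lam.sort (· ≥ ·) with hl
  have hcoe : (l : Multiset ℕ) = lam := Multiset.sort_eq _ _
  have hsort : l.Pairwise (· ≥ ·) := Multiset.pairwise_sort _ _
  have hcond := aux_key n k hk lam hpart hgen l hcoe hsort
  have hlen : l.length = Multiset.card lam := by rw [← hcoe]; simp
  have hsum : l.sum = n := by
    have := hpart.2; rw [← hcoe] at this; simpa using this
  have hpos : ∀ x ∈ l, 0 < x := fun x hx =>
    hpart.1 x (by rw [← hcoe]; exact Multiset.mem_coe.mpr hx)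
  rw [← hlen]
  exact aux_len_le k hk n l hpos hsum hcond
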